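/- Let N=(V,E,s,t) be an acyclic unit-capacity point-to-point network and 1 ≤ k ≤ C_N(s,t). For an edge e ∈ E, there exists a k-CF of N containing e if and only if there exists a directed s-t path p containing e such that C_{N\p}(s,t) ≥ C_N(s,t) − k, where N\p denotes N with all edges of p deleted. -/

import Mathlib

/-- A point-to-point network: a finite directed multigraph with edge set
`edges`, endpoint maps `tail`/`head`, source `s` and sink `t`; every edge has
unit capacity. -/
structure Network (V : Type) (ε : Type) where
  edges : Finset ε
  tail : ε → V
  head : ε → V
  s : V
  t : V

namespace Network

variable {V ε : Type} [DecidableEq ε]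

/-- `p` is a nonempty directed walk from `u` to `v` using edges of `N`. -/
def IsWalk (N : Network V ε) (u v : V) (p : List ε) : Prop :=
  p ≠ [] ∧ (∀ e ∈ p, e ∈ N.edges) ∧
  (∀ i, ∀ h : i + 1 < p.length,
    N.head (p.get ⟨i, Nat.lt_of_succ_lt h⟩) = N.tail (p.get ⟨i + 1, h⟩)) ∧
  (∀ h : 0 < p.length, N.tail (p.get ⟨0, h⟩) = u) ∧
  (∀ h : 0 < p.length, N.head (p.get ⟨p.length - 1, Nat.sub_lt h Nat.one_pos⟩) = v)

/-- An `s`-`t` path: an edge-simple walk from the source to the sink. -/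
def IsPath (N : Network V ε) (p : List ε) : Prop :=
  N.IsWalk N.s N.t p ∧ p.Nodup

/-- `v` is reachable from `u` by a directed walk (or `u = v`). -/
def Reach (N : Network V ε) (u v : V) : Prop :=
  u = v ∨ ∃ p, N.IsWalk u v p

/-- Reachability within the subgraph induced by the vertex set `S`. -/
def ReachIn (N : Network V ε) (S : Set V) (u v : V) : Prop :=
  u = v ∨ ∃ p, N.IsWalk u v p ∧ ∀ e ∈ p, N.tail e ∈ S ∧ N.head e ∈ S

/-- An edge-simple directed cycle. -/
def IsCycle (N : Network V ε) (p : List ε) : Prop :=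
  ∃ u, N.IsWalk u u p ∧ p.Nodup

def Acyclic (N : Network V ε) : Prop := ∀ p, ¬ N.IsCycle p

/-- A collection of pairwise edge-disjoint `s`-`t` paths (an integral flow in a
unit-capacity network). -/
def IsFlowList (N : Network V ε) (fs : List (List ε)) : Prop :=
  (∀ p ∈ fs, N.IsPath p) ∧ fs.Pairwise fun p q => ∀ e ∈ p, e ∉ q

def HasFlow (N : Network V ε) (n : ℕ) : Prop :=
  ∃ fs, N.IsFlowList fs ∧ fs.length = n

/-- The maximum-flow value `C_N(s,t)`: the maximum number of pairwise
edge-disjoint directed `s`-`t` paths. -/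
noncomputable def maxFlow (N : Network V ε) : ℕ :=
  sSup {n | N.HasFlow n}

/-- Delete the edges of `F` from the network. -/
def del (N : Network V ε) (F : Finset ε) : Network V ε :=
  { N with edges := N.edges \ F }

/-- `F` is a `k`-th order capacity factor of `N`:
`C_{N\F} ≤ C_N − k`, and `C_{N\F'} > C_N − k` for every proper `F' ⊊ F`. -/
def IsKCF (N : Network V ε) (k : ℕ) (F : Finset ε) : Prop :=
  F.Nonempty ∧ F ⊆ N.edges ∧ (N.del F).maxFlow + k ≤ N.maxFlow ∧
    ∀ F' ⊂ F, N.maxFlow < (N.del F').maxFlow + k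

/-- `F` is a capacity factor of `N`: deleting `F` decreases the maximum flow,
while deleting any proper subset does not. -/
def IsCF (N : Network V ε) (F : Finset ε) : Prop :=
  F.Nonempty ∧ F ⊆ N.edges ∧ (N.del F).maxFlow < N.maxFlow ∧
    ∀ F' ⊂ F, (N.del F').maxFlow = N.maxFlow

/-- The set of edges used by a flow given as a list of paths. -/
def usedEdges (fs : List (List ε)) : Finset ε := fs.flatten.toFinset

/-- Residual network w.r.t. a set of used (unit-capacity) edges: used edges
are reversed, unused edges keep their direction. -/
def residual (N : Network V ε) (used : Finset ε) : Network V ε :=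
  { edges := N.edges,
    tail := fun e => if e ∈ used then N.head e else N.tail e,
    head := fun e => if e ∈ used then N.tail e else N.head e,
    s := N.s, t := N.t }

/-- The same network with sink replaced by `v`. -/
def withSink (N : Network V ε) (v : V) : Network V ε := { N with t := v }

end Network

open Network

set_option linter.unusedSectionVars false
set_option maxHeartbeats 1000000

namespace Network

variable {V ε : Type} [DecidableEq ε] {N : Network V ε}

/-- Walks as an inductive predicate. -/
inductive W (N : Network V ε) : V → V → List ε → Prop
  | single {e} (he : e ∈ N.edges) : W N (N.tail e) (N.head e) [e]
  | cons {e v p} (he : e ∈ N.edges) (h : W N (N.head e) v p) : W N (N.tail e) v (e :: p)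

theorem W.ne_nil {u v p} (h : N.W u v p) : p ≠ [] := by cases h <;> simp

theorem W.mem_edges {u v p} (h : N.W u v p) : ∀ e ∈ p, e ∈ N.edges := by
  induction h with
  | single he => simpa using he
  | cons he _ ih =>
    intro a ha
    rcases List.mem_cons.1 ha with rfl | ha
    · exact he
    · exact ih a ha

theorem W.start {u v e p} (h : N.W u v (e :: p)) : u = N.tail e := by cases h <;> rfl

theorem W.end_mem {u v p} (h : N.W u v p) : ∃ e ∈ p, N.head e = v := by
  induction h with
  | single he => exact ⟨_, by simp, rfl⟩
  | cons he _ ih => obtain ⟨a, ha, hv⟩ := ih; exact ⟨a, by simp [ha], hv⟩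

theorem W.append {u v w p q} (h1 : N.W u v p) (h2 : N.W v w q) : N.W u w (p ++ q) := by
  induction h1 with
  | single he => exact W.cons he h2
  | cons he _ ih => exact W.cons he (ih h2)

theorem W.cons_inv {u w e l} (h : N.W u w (e :: l)) (hl : l ≠ []) :
    u = N.tail e ∧ e ∈ N.edges ∧ N.W (N.head e) w l := by
  cases h with
  | single he => exact absurd rfl hl
  | cons he h' => exact ⟨rfl, he, h'⟩

theorem W.split {q} (hq : q ≠ []) : ∀ {p u w}, N.W u w (p ++ q) →
    ∃ m, N.W m w q ∧ (p = [] → m = u) ∧ (p ≠ [] → N.W u m p) := by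
  intro p
  induction p with
  | nil => exact fun h => ⟨_, h, fun _ => rfl, fun h' => absurd rfl h'⟩
  | cons e p ih =>
    intro u w h
    rw [List.cons_append] at h
    obtain ⟨hu, he, h'⟩ := h.cons_inv (List.append_ne_nil_of_right_ne_nil p hq)
    obtain ⟨m, h2, hm1, hm2⟩ := ih h'
    subst hu
    refine ⟨m, h2, fun h' => by simp at h', fun _ => ?_⟩
    rcases eq_or_ne p [] with rfl | hp
    · rw [hm1 rfl]; exact W.single he
    · exact W.cons he (hm2 hp)

end Network
namespace Network

variable {V ε : Type} [DecidableEq ε] {N : Network V ε}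

private theorem get_last_cons {e : ε} {p : List ε} (hp : p ≠ []) :
    (e :: p).get ⟨(e :: p).length - 1, Nat.sub_lt (by simp) Nat.one_pos⟩
      = p.get ⟨p.length - 1, Nat.sub_lt (List.length_pos_iff.2 hp) Nat.one_pos⟩ := by
  rw [List.get_eq_getElem, List.get_eq_getElem, ← List.getLast_eq_getElem (by simp), ← List.getLast_eq_getElem hp, List.getLast_cons hp]

theorem W.isWalk {u v p} (h : N.W u v p) : N.IsWalk u v p := by
  induction h with
  | single he =>
    refine ⟨by simp, by simpa using he, ?_, fun _ => rfl, fun _ => rfl⟩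
    intro i hi; simp at hi
  | cons he h ih =>
    obtain ⟨hne, hmem, hcons, hfst, hlst⟩ := ih
    have hlp : 0 < _root_.List.length ‹List ε› := List.length_pos_iff.2 hne
    rename_i e v p
    have hp0 : 0 < p.length := List.length_pos_iff.2 hne
    refine ⟨by simp, ?_, ?_, fun _ => rfl, ?_⟩
    · intro a ha
      rcases List.mem_cons.1 ha with rfl | ha
      · exact he
      · exact hmem a ha
    · intro i hi
      match i with
      | 0 =>
        have h1 : 0 < p.length := by simpa using hi
        simpa using (hfst h1).symm
      | (j+1) =>
        have hj : j + 1 < p.length := by simpa using hi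
        simpa using hcons j hj
    · intro _
      have : (e :: p).length - 1 = (p.length - 1) + 1 := by
        simp; omega
      rw [get_last_cons hne]; exact hlst hp0

theorem IsWalk.w {u v p} (h : N.IsWalk u v p) : N.W u v p := by
  induction p generalizing u with
  | nil => exact absurd rfl h.1
  | cons e p ih =>
    obtain ⟨hne, hmem, hcons, hfst, hlst⟩ := h
    have hu : u = N.tail e := (hfst (by simp)).symm
    subst hu
    rcases eq_or_ne p [] with rfl | hp
    · have hv : N.head e = v := by simpa using hlst (by simp)
      exact hv ▸ W.single (hmem e (by simp))
    · have hp0 : 0 < p.length := List.length_pos_iff.2 hp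
      have hw : N.IsWalk (N.head e) v p := by
        refine ⟨hp, fun a ha => hmem a (by simp [ha]), ?_, ?_, ?_⟩
        · intro i hi
          have hi' : (i+1) + 1 < (e :: p).length := by simpa using Nat.succ_lt_succ hi
          simpa using hcons (i+1) hi'
        · intro _
          have h1 : 0 + 1 < (e :: p).length := by simpa using hp0
          simpa using (hcons 0 h1).symm
        · intro _
          have := hlst (by simp)
          rw [get_last_cons hp] at this; exact this
      exact W.cons (hmem e (by simp)) (ih hw)

end Network
namespace Network

variable {V ε : Type} [DecidableEq ε] {N : Network V ε}

private theorem dup_decomp {a : ε} : ∀ {l : List ε}, List.Duplicate a l →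
    ∃ l₁ l₂ l₃, l = l₁ ++ a :: l₂ ++ a :: l₃ := by
  intro l h
  induction h with
  | cons_mem hm =>
    obtain ⟨s, t, rfl⟩ := List.append_of_mem hm
    exact ⟨[], s, t, rfl⟩
  | @cons_duplicate y _ _ ih =>
    obtain ⟨l₁, l₂, l₃, rfl⟩ := ih
    exact ⟨y :: l₁, l₂, l₃, rfl⟩

/-- From a walk with a duplicated edge, extract a strictly shorter closed walk. -/
theorem W.shorter_closed {u v p} (h : N.W u v p) (hd : ¬ p.Nodup) :
    ∃ x c, N.W x x c ∧ c.length < p.length := by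
  obtain ⟨a, ha⟩ := List.exists_duplicate_iff_not_nodup.2 hd
  obtain ⟨l₁, l₂, l₃, rfl⟩ := dup_decomp ha
  have h1 : N.W u v (l₁ ++ ((a :: l₂) ++ (a :: l₃))) := by simpa using h
  obtain ⟨m, h2, -, -⟩ := W.split (by simp) h1
  obtain ⟨m', h3, -, hm2⟩ := W.split (p := a :: l₂) (by simp) h2
  have hw := hm2 (by simp)
  have h4 : m = N.tail a := hw.start
  have h5 : m' = N.tail a := h3.start
  rw [h5, ← h4] at hw
  exact ⟨m, a :: l₂, hw, by simp; omega⟩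

theorem Acyclic.no_closed (hA : N.Acyclic) {u : V} {p : List ε} (h : N.W u u p) : False := by
  have key : ∀ n {p : List ε} {u : V}, p.length = n → ¬ N.W u u p := by
    intro n
    induction n using Nat.strong_induction_on with
    | _ n ih =>
      intro p u hlen h
      by_cases hd : p.Nodup
      · exact hA p ⟨u, h.isWalk, hd⟩
      · obtain ⟨x, c, hc, hlt⟩ := h.shorter_closed hd
        exact ih c.length (hlen ▸ hlt) rfl hc
  exact key p.length rfl h

theorem W.nodup (hA : N.Acyclic) {u v p} (h : N.W u v p) : p.Nodup := by
  by_contra hd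
  obtain ⟨x, c, hc, -⟩ := h.shorter_closed hd
  exact hA.no_closed hc

end Network
namespace Network

variable {V ε : Type} [DecidableEq ε] {N : Network V ε}

theorem W.balance {u v p} (h : N.W u v p) :
    (↑(p.map N.tail) : Multiset V) + {v} = (↑(p.map N.head) : Multiset V) + {u} := by
  induction h with
  | single he => simp [add_comm]
  | cons he h ih =>
    simp only [List.map_cons, ← Multiset.cons_coe, ← Multiset.singleton_add]
    rw [add_assoc, ih]
    abel

private theorem mcoe_append (l₁ l₂ : List V) : (↑(l₁ ++ l₂) : Multiset V) = ↑l₁ + ↑l₂ := rfl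

theorem IsFlowList.balance {fs : List (List ε)} (h : N.IsFlowList fs) :
    (↑(fs.flatten.map N.tail) : Multiset V) + fs.length • {N.t} =
    (↑(fs.flatten.map N.head) : Multiset V) + fs.length • {N.s} := by
  induction fs with
  | nil => simp
  | cons q fs ih =>
    have hq : N.W N.s N.t q := (h.1 q (by simp)).1.w
    have ih' := ih ⟨fun p hp => h.1 p (by simp [hp]), h.2.of_cons⟩
    have hb := hq.balance
    simp only [List.flatten_cons, List.map_append, List.length_cons, succ_nsmul, mcoe_append]
    calc (↑(q.map N.tail) : Multiset V) + ↑(fs.flatten.map N.tail) + (fs.length • {N.t} + {N.t})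
        = (↑(q.map N.tail) + {N.t}) + (↑(fs.flatten.map N.tail) + fs.length • {N.t}) := by abel
      _ = (↑(q.map N.head) + {N.s}) + (↑(fs.flatten.map N.head) + fs.length • {N.s}) := by
          rw [hb, ih']
      _ = ↑(q.map N.head) + ↑(fs.flatten.map N.head) + (fs.length • {N.s} + {N.s}) := by abel

/-- A nonempty "balanced" edge set in an acyclic network is impossible. -/
theorem balanced_empty (hA : N.Acyclic) (D : Finset ε) (hDsub : D ⊆ N.edges)
    (hbal : D.val.map N.tail = D.val.map N.head) : D = ∅ := by
  by_contra hne
  obtain ⟨e₀, he₀⟩ := Finset.nonempty_of_ne_empty hne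
  have key : ∀ n, ∃ u v p, N.W u v p ∧ (∀ e ∈ p, e ∈ D) ∧ p.length = n + 1 := by
    intro n
    induction n with
    | zero => exact ⟨_, _, [e₀], W.single (hDsub he₀), by simpa using he₀, rfl⟩
    | succ n ih =>
      obtain ⟨u, v, p, hw, hmem, hlen⟩ := ih
      obtain ⟨a, ha, hav⟩ := hw.end_mem
      have hvH : v ∈ D.val.map N.head := Multiset.mem_map.2 ⟨a, hmem a ha, hav⟩
      rw [← hbal] at hvH
      obtain ⟨e', he', hte⟩ := Multiset.mem_map.1 hvH
      have hw2 : N.W u (N.head e') (p ++ [e']) := hw.append (hte ▸ W.single (hDsub he'))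
      refine ⟨u, N.head e', p ++ [e'], hw2, ?_, by simp [hlen]⟩
      intro x hx
      rcases List.mem_append.1 hx with hx | hx
      · exact hmem x hx
      · rw [List.mem_singleton] at hx; subst hx; exact he'
  obtain ⟨u, v, p, hw, hmem, hlen⟩ := key D.card
  have hnd : p.Nodup := hw.nodup hA
  have : p.length ≤ D.card := by
    have h1 : p.toFinset ⊆ D := fun x hx => hmem x (List.mem_toFinset.1 hx)
    have h2 := Finset.card_le_card h1
    rwa [List.toFinset_card_of_nodup hnd] at h2
  omega

end Network
namespace Network

variable {V ε : Type} [DecidableEq ε] {N : Network V ε}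

theorem IsFlowList.sublist {fs gs : List (List ε)} (h : N.IsFlowList fs)
    (hs : gs.Sublist fs) : N.IsFlowList gs :=
  ⟨fun p hp => h.1 p (hs.subset hp), h.2.sublist hs⟩

theorem IsFlowList.flatten_nodup {fs : List (List ε)} (h : N.IsFlowList fs) :
    fs.flatten.Nodup := by
  rw [List.nodup_flatten]
  exact ⟨fun l hl => (h.1 l hl).2, h.2.imp (fun hpq => hpq)⟩

theorem IsFlowList.length_le {fs : List (List ε)} (h : N.IsFlowList fs) :
    fs.length ≤ N.edges.card := by
  have hsub : fs.flatten.toFinset ⊆ N.edges := by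
    intro x hx
    rw [List.mem_toFinset, List.mem_flatten] at hx
    obtain ⟨l, hl, hx⟩ := hx
    exact (h.1 l hl).1.2.1 x hx
  have h1 : fs.flatten.length ≤ N.edges.card := by
    have := Finset.card_le_card hsub
    rwa [List.toFinset_card_of_nodup h.flatten_nodup] at this
  have h2 : fs.length ≤ fs.flatten.length := by
    clear h1 hsub
    induction fs with
    | nil => simp
    | cons q fs ih =>
      have hq : q ≠ [] := (h.1 q (by simp)).1.1
      have := ih ⟨fun p hp => h.1 p (by simp [hp]), h.2.of_cons⟩
      simp only [List.flatten_cons, List.length_append, List.length_cons]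
      have : 1 ≤ q.length := List.length_pos_iff.2 hq
      omega
  omega

theorem bddAbove_hasFlow : BddAbove {n | N.HasFlow n} := by
  refine ⟨N.edges.card, ?_⟩
  rintro n ⟨fs, hfs, rfl⟩
  exact hfs.length_le

theorem hasFlow_zero : N.HasFlow 0 := ⟨[], ⟨by simp, by simp⟩, rfl⟩

theorem hasFlow_maxFlow : N.HasFlow N.maxFlow := by
  have h : sSup {n | N.HasFlow n} ∈ {n | N.HasFlow n} :=
    Nat.sSup_mem ⟨0, hasFlow_zero⟩ bddAbove_hasFlow
  exact h

theorem HasFlow.le_maxFlow {n} (h : N.HasFlow n) : n ≤ N.maxFlow :=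
  le_csSup bddAbove_hasFlow h

theorem HasFlow.mono {n j} (h : N.HasFlow n) (hj : j ≤ n) : N.HasFlow j := by
  obtain ⟨fs, hfs, rfl⟩ := h
  exact ⟨fs.take j, hfs.sublist (List.take_sublist j fs), by simp [hj]⟩

theorem isWalk_del_iff {F : Finset ε} {u v p} :
    (N.del F).IsWalk u v p ↔ N.IsWalk u v p ∧ ∀ e ∈ p, e ∉ F := by
  constructor
  · rintro ⟨h1, h2, h3, h4, h5⟩
    exact ⟨⟨h1, fun e he => (Finset.mem_sdiff.1 (h2 e he)).1, h3, h4, h5⟩,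
      fun e he => (Finset.mem_sdiff.1 (h2 e he)).2⟩
  · rintro ⟨⟨h1, h2, h3, h4, h5⟩, h6⟩
    exact ⟨h1, fun e he => Finset.mem_sdiff.2 ⟨h2 e he, h6 e he⟩, h3, h4, h5⟩

theorem isPath_del_iff {F : Finset ε} {p} :
    (N.del F).IsPath p ↔ N.IsPath p ∧ ∀ e ∈ p, e ∉ F := by
  unfold IsPath
  rw [show (N.del F).s = N.s from rfl, show (N.del F).t = N.t from rfl, isWalk_del_iff]
  tauto

theorem isFlowList_del_iff {F : Finset ε} {fs : List (List ε)} :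
    (N.del F).IsFlowList fs ↔ N.IsFlowList fs ∧ ∀ p ∈ fs, ∀ e ∈ p, e ∉ F := by
  unfold IsFlowList
  constructor
  · rintro ⟨h1, h2⟩
    exact ⟨⟨fun p hp => (isPath_del_iff.1 (h1 p hp)).1, h2⟩,
      fun p hp => (isPath_del_iff.1 (h1 p hp)).2⟩
  · rintro ⟨⟨h1, h2⟩, h3⟩
    exact ⟨fun p hp => isPath_del_iff.2 ⟨h1 p hp, h3 p hp⟩, h2⟩

theorem maxFlow_del_le {F : Finset ε} : (N.del F).maxFlow ≤ N.maxFlow := by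
  obtain ⟨fs, hfs, hlen⟩ := hasFlow_maxFlow (N := N.del F)
  exact hlen ▸ HasFlow.le_maxFlow ⟨fs, (isFlowList_del_iff.1 hfs).1, rfl⟩

theorem maxFlow_del_mono {F F' : Finset ε} (h : F' ⊆ F) :
    (N.del F).maxFlow ≤ (N.del F').maxFlow := by
  obtain ⟨fs, hfs, hlen⟩ := hasFlow_maxFlow (N := N.del F)
  obtain ⟨hfs', hav⟩ := isFlowList_del_iff.1 hfs
  refine hlen ▸ HasFlow.le_maxFlow (N := N.del F') ⟨fs, isFlowList_del_iff.2 ⟨hfs', ?_⟩, rfl⟩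
  exact fun p hp e hep hF' => hav p hp e hep (h hF')

theorem maxFlow_del_empty : (N.del (∅ : Finset ε)).maxFlow = N.maxFlow := by
  refine le_antisymm maxFlow_del_le ?_
  obtain ⟨fs, hfs, hlen⟩ := hasFlow_maxFlow (N := N)
  exact hlen ▸ HasFlow.le_maxFlow (N := N.del ∅)
    ⟨fs, isFlowList_del_iff.2 ⟨hfs, by simp⟩, rfl⟩

theorem maxFlow_del_path_lt {p : List ε} (hp : N.IsPath p) :
    (N.del p.toFinset).maxFlow < N.maxFlow := by
  obtain ⟨fs, hfs, hlen⟩ := hasFlow_maxFlow (N := N.del p.toFinset)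
  obtain ⟨hfs', hav⟩ := isFlowList_del_iff.1 hfs
  have : N.HasFlow ((N.del p.toFinset).maxFlow + 1) := by
    refine ⟨p :: fs, ⟨?_, ?_⟩, by simp [hlen]⟩
    · intro q hq
      rcases List.mem_cons.1 hq with rfl | hq
      · exact hp
      · exact hfs'.1 q hq
    · refine List.Pairwise.cons ?_ hfs'.2
      intro q hq a hap haq
      exact hav q hq a haq (List.mem_toFinset.2 hap)
  have := this.le_maxFlow
  omega

theorem usedEdges_sub_edges {fs : List (List ε)} (h : N.IsFlowList fs) :
    usedEdges fs ⊆ N.edges := by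
  intro x hx
  rw [usedEdges, List.mem_toFinset, List.mem_flatten] at hx
  obtain ⟨l, hl, hx⟩ := hx
  exact (h.1 l hl).1.2.1 x hx

/-- Two equal-value flows with nested supports have equal supports (in a DAG). -/
theorem used_eq (hA : N.Acyclic) {g hs : List (List ε)}
    (hg : N.IsFlowList g) (hh : N.IsFlowList hs) (hlen : hs.length = g.length)
    (hsub : usedEdges hs ⊆ usedEdges g) : usedEdges g ⊆ usedEdges hs := by
  set D : Finset ε := usedEdges g \ usedEdges hs with hD
  have hval : (usedEdges g).val = D.val + (usedEdges hs).val := by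
    rw [hD, Finset.sdiff_val]
    exact (tsub_add_cancel_of_le (Finset.val_le_iff.2 hsub)).symm
  have hgv : (usedEdges g).val = ↑g.flatten := by
    rw [usedEdges, List.toFinset, Multiset.toFinset_val]
    exact Multiset.dedup_eq_self.2 (Multiset.coe_nodup.2 hg.flatten_nodup)
  have hhv : (usedEdges hs).val = ↑hs.flatten := by
    rw [usedEdges, List.toFinset, Multiset.toFinset_val]
    exact Multiset.dedup_eq_self.2 (Multiset.coe_nodup.2 hh.flatten_nodup)
  have hbal : D.val.map N.tail = D.val.map N.head := by
    have bg := hg.balance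
    have bh := hh.balance
    rw [hlen] at bh
    have e1 : (↑(g.flatten.map N.tail) : Multiset V) = D.val.map N.tail + ↑(hs.flatten.map N.tail) := by
      rw [← Multiset.map_coe, ← Multiset.map_coe, ← hgv, ← hhv, hval, Multiset.map_add]
    have e2 : (↑(g.flatten.map N.head) : Multiset V) = D.val.map N.head + ↑(hs.flatten.map N.head) := by
      rw [← Multiset.map_coe, ← Multiset.map_coe, ← hgv, ← hhv, hval, Multiset.map_add]
    rw [e1, e2, add_assoc, add_assoc, bh] at bg
    exact add_right_cancel bg
  have hDsub : D ⊆ N.edges := Finset.Subset.trans (Finset.sdiff_subset) (usedEdges_sub_edges hg)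
  have : D = ∅ := balanced_empty hA D hDsub hbal
  intro x hx
  by_contra hxn
  have : x ∈ D := Finset.mem_sdiff.2 ⟨hx, hxn⟩
  simp [‹D = ∅›] at this

end Network
/-- In an acyclic network, `e` lies in some `k`-CF iff some `s`-`t` path `p`
through `e` satisfies `C_{N\p}(s,t) ≥ C_N(s,t) − k`. -/
theorem mem_kCF_iff_path {V ε : Type} [DecidableEq ε]
    (N : Network V ε) (hA : N.Acyclic) (e : ε) (he : e ∈ N.edges)
    (k : ℕ) (hk1 : 1 ≤ k) (hk2 : k ≤ N.maxFlow) :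
    (∃ F, N.IsKCF k F ∧ e ∈ F) ↔
      ∃ p, N.IsPath p ∧ e ∈ p ∧ N.maxFlow ≤ (N.del p.toFinset).maxFlow + k := by
  constructor
  · rintro ⟨F, ⟨hFne, hFsub, hFle, hFmin⟩, heF⟩
    have h1 : N.maxFlow < (N.del (F.erase e)).maxFlow + k :=
      hFmin _ (Finset.erase_ssubset heF)
    obtain ⟨fs, hfs, hlen⟩ := hasFlow_maxFlow (N := N.del (F.erase e))
    obtain ⟨hfsN, hav⟩ := isFlowList_del_iff.1 hfs
    have hex : ∃ q ∈ fs, e ∈ q := by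
      by_contra hno
      push_neg at hno
      have hflow : (N.del F).HasFlow fs.length := by
        refine ⟨fs, isFlowList_del_iff.2 ⟨hfsN, ?_⟩, rfl⟩
        intro p hp a hap haF
        rcases eq_or_ne a e with rfl | hne
        · exact hno p hp hap
        · exact hav p hp a hap (Finset.mem_erase.2 ⟨hne, haF⟩)
      have := hflow.le_maxFlow
      omega
    obtain ⟨q, hqfs, heq⟩ := hex
    have hqN : N.IsPath q := hfsN.1 q hqfs
    refine ⟨q, hqN, heq, ?_⟩
    have hsym : Symmetric (fun p q : List ε => ∀ e ∈ p, e ∉ q) := by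
      intro a b h x hxb hxa
      exact h x hxa hxb
    have hnd : fs.Nodup := by
      refine List.Pairwise.imp_of_mem ?_ hfsN.2
      intro a b ha hb hR
      rintro rfl
      obtain ⟨x, hx⟩ := List.exists_mem_of_ne_nil a (hfsN.1 a ha).1.1
      exact absurd hx (hR x hx)
    have hflow2 : (N.del q.toFinset).HasFlow (fs.length - 1) := by
      refine ⟨fs.erase q, isFlowList_del_iff.2 ⟨⟨?_, ?_⟩, ?_⟩, ?_⟩
      · intro r hr
        exact hfsN.1 r ((List.erase_sublist (a := q)).subset hr)
      · exact hfsN.2.sublist (List.erase_sublist (a := q))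
      · intro r hr a har haq
        obtain ⟨hrq, hrfs⟩ := hnd.mem_erase_iff.1 hr
        exact hsym (haveI : Std.Symm (fun p q : List ε => ∀ e ∈ p, e ∉ q) := ⟨fun a b h => hsym h⟩; hfsN.2.forall hqfs hrfs (Ne.symm hrq)) a har
          (List.mem_toFinset.1 haq)
      · rw [List.length_erase_of_mem hqfs]
    have h2 := hflow2.le_maxFlow
    have h3 : 1 ≤ fs.length := List.length_pos_iff.2 (List.ne_nil_of_mem hqfs)
    omega
  · rintro ⟨p, hp, hep, hple⟩
    obtain ⟨qs, hqs, hqlen⟩ := hasFlow_maxFlow (N := N.del p.toFinset)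
    have hlt := maxFlow_del_path_lt hp
    set C := N.maxFlow with hC
    have hCk : C - k ≤ qs.length := by rw [hqlen]; omega
    obtain ⟨hqsN, hqsav⟩ := isFlowList_del_iff.1 hqs
    set g : List (List ε) := p :: qs.take (C - k) with hgdef
    have hg : N.IsFlowList g := by
      refine ⟨?_, ?_⟩
      · intro r hr
        rcases List.mem_cons.1 hr with rfl | hr
        · exact hp
        · exact hqsN.1 r ((List.take_sublist _ _).subset hr)
      · refine List.Pairwise.cons ?_ (hqsN.2.sublist (List.take_sublist _ _))
        intro r hr a hap har
        exact hqsav r ((List.take_sublist _ _).subset hr) a har (List.mem_toFinset.2 hap)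
    have hglen : g.length = C - k + 1 := by
      simp [hgdef]
      omega
    have heU : e ∈ usedEdges g := by
      rw [usedEdges, List.mem_toFinset, List.mem_flatten]
      exact ⟨p, by simp [hgdef], hep⟩
    set U := usedEdges g with hU
    have hUsub : U ⊆ N.edges := usedEdges_sub_edges hg
    set F₀ : Finset ε := (N.edges \ U) ∪ {e} with hF₀
    have heF₀ : e ∈ F₀ := by simp [hF₀]
    have hF₀sub : F₀ ⊆ N.edges := by
      intro x hx
      rcases Finset.mem_union.1 hx with hx | hx
      · exact (Finset.mem_sdiff.1 hx).1
      · rw [Finset.mem_singleton.1 hx]; exact he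
    have claim1 : C - k + 1 ≤ (N.del (F₀.erase e)).maxFlow := by
      refine hglen ▸ HasFlow.le_maxFlow (N := N.del (F₀.erase e))
        ⟨g, isFlowList_del_iff.2 ⟨hg, ?_⟩, rfl⟩
      intro r hr a har haF
      obtain ⟨hane, haF₀⟩ := Finset.mem_erase.1 haF
      have haU : a ∈ U := by
        rw [hU, usedEdges, List.mem_toFinset, List.mem_flatten]
        exact ⟨r, hr, har⟩
      rcases Finset.mem_union.1 haF₀ with h' | h'
      · exact (Finset.mem_sdiff.1 h').2 haU
      · exact hane (Finset.mem_singleton.1 h')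
    have claim2 : (N.del F₀).maxFlow + k ≤ C := by
      by_contra hcon
      push_neg at hcon
      have hflow : (N.del F₀).HasFlow (C - k + 1) :=
        (hasFlow_maxFlow (N := N.del F₀)).mono (by omega)
      obtain ⟨hs, hhs, hhslen⟩ := hflow
      obtain ⟨hhsN, hhsav⟩ := isFlowList_del_iff.1 hhs
      have hsubU : usedEdges hs ⊆ U := by
        intro x hx
        rw [usedEdges, List.mem_toFinset, List.mem_flatten] at hx
        obtain ⟨r, hr, hx⟩ := hx
        have hxe : x ∈ N.edges := (hhsN.1 r hr).1.2.1 x hx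
        have hxF : x ∉ F₀ := hhsav r hr x hx
        by_contra hxU
        exact hxF (Finset.mem_union_left _ (Finset.mem_sdiff.2 ⟨hxe, hxU⟩))
      have hUsubhs : U ⊆ usedEdges hs :=
        used_eq hA hg hhsN (by rw [hhslen, hglen]) hsubU
      have hehs : e ∈ usedEdges hs := hUsubhs heU
      rw [usedEdges, List.mem_toFinset, List.mem_flatten] at hehs
      obtain ⟨r, hr, her⟩ := hehs
      exact hhsav r hr e her heF₀
    classical
    have hP : F₀ ∈ F₀.powerset.filter (fun F => (N.del F).maxFlow + k ≤ C) := by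
      rw [Finset.mem_filter, Finset.mem_powerset]
      exact ⟨Finset.Subset.refl _, claim2⟩
    obtain ⟨F, hFmem, hFmin⟩ := Finset.exists_min_image _ Finset.card ⟨F₀, hP⟩
    rw [Finset.mem_filter, Finset.mem_powerset] at hFmem
    obtain ⟨hFsub₀, hFprop⟩ := hFmem
    have heF : e ∈ F := by
      by_contra hne
      have hFsub' : F ⊆ F₀.erase e := Finset.subset_erase.2 ⟨hFsub₀, hne⟩
      have hmono := maxFlow_del_mono (N := N) hFsub'
      omega
    have hmin : ∀ F' ⊂ F, C < (N.del F').maxFlow + k := by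
      intro F' hF'
      by_contra hcon
      push_neg at hcon
      have hF'mem : F' ∈ F₀.powerset.filter (fun F => (N.del F).maxFlow + k ≤ C) := by
        rw [Finset.mem_filter, Finset.mem_powerset]
        exact ⟨hF'.subset.trans hFsub₀, hcon⟩
      have h4 := hFmin F' hF'mem
      have h5 := Finset.card_lt_card hF'
      omega
    exact ⟨F, ⟨⟨e, heF⟩, hFsub₀.trans hF₀sub, hFprop, hmin⟩, heF⟩
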